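/- Let $d\ge 1$ and let $x_1\ge\cdots\ge x_d>0$ and $y_1\ge\cdots\ge y_d>0$ be real numbers such that $\prod_{i=1}^l x_i \ge \prod_{i=1}^l y_i$ for every $1\le l\le d$ and $\sum_{i=1}^d x_i = \sum_{i=1}^d y_i$. Then $x_i = y_i$ for every $i$. -/

import Mathlib

open Finset

lemma abel_aux (c u : ℕ → ℝ) : ∀ d, 1 ≤ d →
    (∀ i, 1 ≤ i → i < d → c (i+1) ≤ c i) →
    (∀ l, 1 ≤ l → l ≤ d → 0 ≤ ∑ i ∈ Finset.Icc 1 l, u i) →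
    c d * ∑ i ∈ Finset.Icc 1 d, u i ≤ ∑ i ∈ Finset.Icc 1 d, c i * u i := by
  intro d
  induction d with
  | zero => intro h; omega
  | succ n ih =>
    intro _ hc hS
    by_cases hn : 1 ≤ n
    · rw [Finset.sum_Icc_succ_top (by omega : 1 ≤ n+1),
        Finset.sum_Icc_succ_top (by omega : 1 ≤ n+1)]
      have h1 := ih hn (fun i a b => hc i a (by omega)) (fun l a b => hS l a (by omega))
      have h2 : c (n+1) ≤ c n := hc n hn (by omega)
      have h3 : 0 ≤ ∑ i ∈ Finset.Icc 1 n, u i := hS n hn (by omega)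
      nlinarith [mul_le_mul_of_nonneg_right h2 h3]
    · have hn0 : n = 0 := by omega
      subst hn0
      simp

theorem stmt_7 (d : ℕ) (hd : 1 ≤ d) (x y : ℕ → ℝ)
    (hxpos : ∀ i, 1 ≤ i → i ≤ d → 0 < x i)
    (hypos : ∀ i, 1 ≤ i → i ≤ d → 0 < y i)
    (hxmono : ∀ i j, 1 ≤ i → i ≤ j → j ≤ d → x j ≤ x i)
    (hymono : ∀ i j, 1 ≤ i → i ≤ j → j ≤ d → y j ≤ y i)
    (hprod : ∀ l, 1 ≤ l → l ≤ d →
      ∏ i ∈ Finset.Icc 1 l, y i ≤ ∏ i ∈ Finset.Icc 1 l, x i)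
    (hsum : ∑ i ∈ Finset.Icc 1 d, x i = ∑ i ∈ Finset.Icc 1 d, y i) :
    ∀ i, 1 ≤ i → i ≤ d → x i = y i := by
  set u : ℕ → ℝ := fun i => Real.log (x i) - Real.log (y i) with hu
  have hS : ∀ l, 1 ≤ l → l ≤ d → 0 ≤ ∑ j ∈ Finset.Icc 1 l, u j := by
    intro l h1 h2
    have hx : ∀ j ∈ Finset.Icc 1 l, x j ≠ 0 := fun j hj =>
      (hxpos j (Finset.mem_Icc.1 hj).1 (le_trans (Finset.mem_Icc.1 hj).2 h2)).ne'
    have hy : ∀ j ∈ Finset.Icc 1 l, y j ≠ 0 := fun j hj =>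
      (hypos j (Finset.mem_Icc.1 hj).1 (le_trans (Finset.mem_Icc.1 hj).2 h2)).ne'
    have hpy : 0 < ∏ j ∈ Finset.Icc 1 l, y j :=
      Finset.prod_pos fun j hj =>
        hypos j (Finset.mem_Icc.1 hj).1 (le_trans (Finset.mem_Icc.1 hj).2 h2)
    have hlog := Real.log_le_log hpy (hprod l h1 h2)
    rw [Real.log_prod hy, Real.log_prod hx] at hlog
    simp only [hu, Finset.sum_sub_distrib]
    linarith
  have hcmono : ∀ i, 1 ≤ i → i < d → y (i+1) ≤ y i := fun i a b =>
    hymono i (i+1) a (by omega) (by omega)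
  have habel := abel_aux y u d hd hcmono hS
  have hyd : 0 < y d := hypos d hd le_rfl
  have key : 0 ≤ ∑ j ∈ Finset.Icc 1 d, y j * u j :=
    le_trans (mul_nonneg hyd.le (hS d hd le_rfl)) habel
  have hpt : ∀ j ∈ Finset.Icc 1 d, y j * u j ≤ x j - y j := by
    intro j hj
    obtain ⟨hj1, hj2⟩ := Finset.mem_Icc.1 hj
    have hxj := hxpos j hj1 hj2
    have hyj := hypos j hj1 hj2
    have h := Real.log_le_sub_one_of_pos (div_pos hxj hyj)
    rw [Real.log_div hxj.ne' hyj.ne'] at h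
    have heq : y j * (x j / y j - 1) = x j - y j := by field_simp
    simp only [hu]
    nlinarith [mul_le_mul_of_nonneg_left h hyj.le]
  have hsum0 : ∑ j ∈ Finset.Icc 1 d, (x j - y j) = 0 := by
    rw [Finset.sum_sub_distrib, hsum]; ring
  have hsum2 : ∑ j ∈ Finset.Icc 1 d, ((x j - y j) - y j * u j) = 0 := by
    have hle : ∑ j ∈ Finset.Icc 1 d, ((x j - y j) - y j * u j) ≤ 0 := by
      rw [Finset.sum_sub_distrib, hsum0]; linarith
    have hge : 0 ≤ ∑ j ∈ Finset.Icc 1 d, ((x j - y j) - y j * u j) :=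
      Finset.sum_nonneg fun j hj => sub_nonneg.2 (hpt j hj)
    linarith
  intro i hi1 hid
  have heach := (Finset.sum_eq_zero_iff_of_nonneg
    (fun j hj => sub_nonneg.2 (hpt j hj))).1 hsum2 i (Finset.mem_Icc.2 ⟨hi1, hid⟩)
  by_contra hne
  have hxi := hxpos i hi1 hid
  have hyi := hypos i hi1 hid
  have hr : x i / y i ≠ 1 := by
    intro h
    exact hne ((div_eq_one_iff_eq hyi.ne').1 h)
  have hstr := Real.log_lt_sub_one_of_pos (div_pos hxi hyi) hr
  rw [Real.log_div hxi.ne' hyi.ne'] at hstr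
  have heq : y i * (x i / y i - 1) = x i - y i := by field_simp
  have hlt : y i * (Real.log (x i) - Real.log (y i)) < x i - y i := by
    nlinarith [mul_lt_mul_of_pos_left hstr hyi]
  simp only [hu] at heach
  linarith
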